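/- arXiv:1410.1333 — 2 statements merged into one kernel-verified Lean document; each statement's English description precedes it below -/
import Mathlib

section
/- Let q be a prime power, let k, m be positive integers, let C ⊆ Mat(k×m, F_q) be an F_q-linear subspace, and let (A_i)_{i≥0} and (B_j)_{j≥0} be the rank distributions of C and of its dual C^⊥. Then for every integer 0 ≤ ν ≤ k, q^{mν} · Σ_{i=0}^{k−ν} A_i · [k−i choose ν]_q = |C| · Σ_{j=0}^{ν} B_j · [k−j choose ν−j]_q. -/
open Matrix BigOperators

/-- The Gaussian (q-)binomial coefficient, defined via the q-Pascal recursion. -/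
def qBinom (q : ℕ) : ℕ → ℕ → ℕ
  | _, 0 => 1
  | 0, _ + 1 => 0
  | s + 1, t + 1 => qBinom q s t + q ^ (t + 1) * qBinom q s (t + 1)

variable {F : Type} [Field F]

/-- The dual of a rank-metric code with respect to the trace product. -/
def dualCode {k m : ℕ} (C : Submodule F (Matrix (Fin k) (Fin m) F)) :
    Submodule F (Matrix (Fin k) (Fin m) F) where
  carrier := {N | ∀ M ∈ C, Matrix.trace (M * Nᵀ) = 0}
  add_mem' := by
    intro a b ha hb M hM
    rw [Set.mem_setOf_eq] at *
    rw [Matrix.transpose_add, Matrix.mul_add, Matrix.trace_add, ha M hM, hb M hM, add_zero]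
  zero_mem' := by
    intro M hM
    simp
  smul_mem' := by
    intro c N hN M hM
    rw [Set.mem_setOf_eq] at *
    rw [Matrix.transpose_smul, Matrix.mul_smul, Matrix.trace_smul, hN M hM, smul_zero]

/-- Minimum rank of a code. -/
noncomputable def minrk {k m : ℕ} (C : Submodule F (Matrix (Fin k) (Fin m) F)) : ℕ :=
  sInf {r | ∃ M ∈ C, M ≠ 0 ∧ M.rank = r}

/-- Maximum rank of a code. -/
noncomputable def maxrk {k m : ℕ} (C : Submodule F (Matrix (Fin k) (Fin m) F)) : ℕ :=
  sSup {r | ∃ M ∈ C, M.rank = r}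

/-- Rank distribution of a code. -/
noncomputable def rankDist {k m : ℕ} (C : Submodule F (Matrix (Fin k) (Fin m) F)) (i : ℕ) : ℕ :=
  Nat.card {M : Matrix (Fin k) (Fin m) F // M ∈ C ∧ M.rank = i}

/-- MRD codes. -/
def IsMRD {k m : ℕ} (C : Submodule F (Matrix (Fin k) (Fin m) F)) : Prop :=
  C = ⊥ ∨ Module.finrank F ↥C = max k m * (min k m - minrk C + 1)

/-- Optimal anticodes. -/
def IsOptimalAnticode {k m : ℕ} (C : Submodule F (Matrix (Fin k) (Fin m) F)) : Prop :=
  Module.finrank F ↥C = max k m * maxrk C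

/-- The subspace of matrices whose column space is contained in `U`. -/
def matIn {k : ℕ} (m : ℕ) (U : Submodule F (Fin k → F)) :
    Submodule F (Matrix (Fin k) (Fin m) F) where
  carrier := {M | ∀ j, Mᵀ j ∈ U}
  add_mem' := by
    intro a b ha hb j
    rw [Matrix.transpose_add]
    exact U.add_mem (ha j) (hb j)
  zero_mem' := by
    intro j
    rw [Matrix.transpose_zero]
    exact U.zero_mem
  smul_mem' := by
    intro c M hM j
    rw [Matrix.transpose_smul]
    exact U.smul_mem c (hM j)

/-- The dual of a subspace of `Fin k → K` with respect to the standard inner product. -/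
def dualPi {K : Type} [Field K] {k : ℕ} (C : Submodule K (Fin k → K)) :
    Submodule K (Fin k → K) where
  carrier := {β | ∀ α ∈ C, ∑ i, α i * β i = 0}
  add_mem' := by
    intro a b ha hb α hα
    rw [Set.mem_setOf_eq] at *
    have : ∑ i, α i * (a + b) i = (∑ i, α i * a i) + ∑ i, α i * b i := by
      rw [← Finset.sum_add_distrib]
      exact Finset.sum_congr rfl fun i _ => by simp [mul_add]
    rw [this, ha α hα, hb α hα, add_zero]
  zero_mem' := by
    intro α hα
    simp
  smul_mem' := by
    intro c β hβ α hα
    rw [Set.mem_setOf_eq] at *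
    have : ∑ i, α i * (c • β) i = c * ∑ i, α i * β i := by
      rw [Finset.mul_sum]
      exact Finset.sum_congr rfl fun i _ => by simp [smul_eq_mul]; ring
    rw [this, hβ α hα, mul_zero]

/-- The matrix associated to a vector `α ∈ K^k` with respect to a basis `G` of `K` over `F`. -/
noncomputable def matOfBasis (F K : Type) [Field F] [Field K] [Algebra F K]
    (k m : ℕ) (G : Module.Basis (Fin m) F K) :
    (Fin k → K) →ₗ[F] Matrix (Fin k) (Fin m) F where
  toFun α := Matrix.of fun i j => G.repr (α i) j
  map_add' α β := by
    ext i j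
    simp
  map_smul' c α := by
    ext i j
    simp

/-- The `h`-trace of a `k × m` matrix (`k ≤ m`). -/
def hTrace {k m : ℕ} (hkm : k ≤ m) (h : ℕ) (M : Matrix (Fin k) (Fin m) F) : F :=
  ∑ i : Fin k, if (i : ℕ) < h then M i (Fin.castLE hkm i) else 0

section Aux
open Module
set_option linter.unusedSectionVars false

lemma qBinom_zero_right (q n : ℕ) : qBinom q n 0 = 1 := by cases n <;> rfl

lemma qBinom_eq_zero (q : ℕ) : ∀ {n t : ℕ}, n < t → qBinom q n t = 0 := by
  intro n
  induction n with
  | zero => intro t ht; cases t with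
    | zero => omega
    | succ t => rfl
  | succ n ih =>
    intro t ht
    cases t with
    | zero => omega
    | succ t =>
      show qBinom q n t + q ^ (t+1) * qBinom q n (t+1) = 0
      rw [ih (by omega), ih (by omega)]
      simp

lemma qBinom_key (q : ℕ) : ∀ n t : ℕ,
    (qBinom q n t : ℤ) * ∏ i ∈ Finset.range t, ((q:ℤ)^t - (q:ℤ)^i) =
      ∏ i ∈ Finset.range t, ((q:ℤ)^n - (q:ℤ)^i) := by
  have prodsucc : ∀ a t : ℕ, ∏ i ∈ Finset.range (t+1), ((q:ℤ)^(a+1) - (q:ℤ)^i) =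
      ((q:ℤ)^(a+1) - 1) * ((q:ℤ)^t * ∏ i ∈ Finset.range t, ((q:ℤ)^a - (q:ℤ)^i)) := by
    intro a t
    rw [Finset.prod_range_succ']
    have : ∀ i ∈ Finset.range t, ((q:ℤ)^(a+1) - (q:ℤ)^(i+1)) = (q:ℤ) * ((q:ℤ)^a - (q:ℤ)^i) := by
      intro i _; ring
    rw [Finset.prod_congr rfl this, Finset.prod_mul_distrib, Finset.prod_const,
      Finset.card_range]
    ring
  intro n
  induction n with
  | zero =>
    intro t
    cases t with
    | zero => simp [qBinom_zero_right]
    | succ t =>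
      rw [qBinom_eq_zero q (by omega)]
      push_cast
      rw [zero_mul]
      exact (Finset.prod_eq_zero (Finset.mem_range.2 (Nat.succ_pos t)) (by simp)).symm
  | succ n ih =>
    intro t
    cases t with
    | zero => simp [qBinom_zero_right]
    | succ t =>
      show ((qBinom q n t + q ^ (t+1) * qBinom q n (t+1) : ℕ) : ℤ) * _ = _
      push_cast
      rw [prodsucc n t, prodsucc t t]
      have h1 := ih t
      have h2 := ih (t+1)
      rw [prodsucc t t] at h2
      have h3 : ∏ i ∈ Finset.range (t+1), ((q:ℤ)^n - (q:ℤ)^i) =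
          (∏ i ∈ Finset.range t, ((q:ℤ)^n - (q:ℤ)^i)) * ((q:ℤ)^n - (q:ℤ)^t) :=
        Finset.prod_range_succ _ _
      linear_combination ((q:ℤ)^(t+1) - 1) * (q:ℤ)^t * h1 + (q:ℤ)^(t+1) * h2 + (q:ℤ)^(t+1) * h3

variable {F V : Type} [Field F] [Fintype F] [AddCommGroup V] [Module F V] [Finite V]

theorem card_submodule (t : ℕ) :
    Nat.card {W : Submodule F V // finrank F W = t}
      = qBinom (Fintype.card F) (finrank F V) t := by
  classical
  have hFD : FiniteDimensional F V := inferInstance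
  set q := Fintype.card F with hq
  set n := finrank F V with hn
  rcases le_or_gt t n with htn | htn
  · have hfin : Finite (Submodule F V) :=
      Finite.of_injective (fun W => (W : Set V)) fun _ _ h => SetLike.coe_injective h
    haveI := Fintype.ofFinite (Submodule F V)
    let f : {s : Fin t → V // LinearIndependent F s} → {W : Submodule F V // finrank F W = t} :=
      fun s => ⟨Submodule.span F (Set.range s.1), by
        rw [finrank_span_eq_card s.2, Fintype.card_fin]⟩
    have fiber_equiv : ∀ W : {W : Submodule F V // finrank F W = t},
        {s : {s : Fin t → V // LinearIndependent F s} // f s = W}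
          ≃ {s : Fin t → ↥W.1 // LinearIndependent F s} := by
      intro W
      have hWf : ∀ (s : {s : Fin t → V // LinearIndependent F s}), f s = W →
          ∀ i, s.1 i ∈ W.1 := by
        intro s hs i
        have : Submodule.span F (Set.range s.1) = W.1 := congrArg Subtype.val hs
        exact this ▸ Submodule.subset_span (Set.mem_range_self i)
      refine ⟨fun s => ⟨fun i => ⟨s.1.1 i, hWf s.1 s.2 i⟩, ?_⟩,
        fun s => ⟨⟨fun i => (s.1 i : V), s.2.map' W.1.subtype (Submodule.ker_subtype _)⟩, ?_⟩,
        fun s => Subtype.ext (Subtype.ext (funext fun i => rfl)),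
        fun s => Subtype.ext (funext fun i => rfl)⟩
      · exact LinearIndependent.of_comp W.1.subtype s.1.2
      · apply Subtype.ext
        show Submodule.span F (Set.range fun i => (s.1 i : V)) = W.1
        have h1 : (Set.range fun i => (s.1 i : V)) = W.1.subtype '' Set.range s.1 := by
          rw [← Set.range_comp]; rfl
        rw [h1, Submodule.span_image,
          s.2.span_eq_top_of_card_eq_finrank' (by rw [Fintype.card_fin, W.2]),
          Submodule.map_subtype_top]
    have key : ∀ W : {W : Submodule F V // finrank F W = t},
        Nat.card {s : {s : Fin t → V // LinearIndependent F s} // f s = W}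
          = ∏ i : Fin t, (q ^ t - q ^ (i:ℕ)) := by
      intro W
      rw [Nat.card_congr (fiber_equiv W)]
      have : Finite ↥W.1 := Subtype.finite
      rw [card_linearIndependent (K := F) (V := ↥W.1) (by rw [W.2])]
      rw [W.2]
    -- now total count
    have total := card_linearIndependent (K := F) (V := V) (k := t) htn
    rw [Nat.card_congr (Equiv.sigmaFiberEquiv f).symm] at total
    haveI : Fintype {s : Fin t → V // LinearIndependent F s} := Fintype.ofFinite _
    haveI : ∀ W : {W : Submodule F V // finrank F W = t},
        Fintype {s : {s : Fin t → V // LinearIndependent F s} // f s = W} :=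
      fun W => Fintype.ofFinite _
    rw [Nat.card_eq_fintype_card, Fintype.card_sigma] at total
    have total2 : Nat.card {W : Submodule F V // finrank F W = t}
        * ∏ i : Fin t, (q ^ t - q ^ (i:ℕ)) = ∏ i : Fin t, (q ^ n - q ^ (i:ℕ)) := by
      rw [← total, Nat.card_eq_fintype_card, Finset.sum_congr rfl
        (fun W _ => by rw [← Nat.card_eq_fintype_card, key W]), Finset.sum_const,
        Finset.card_univ, smul_eq_mul]
    -- compare with qBinom_key
    have hq2 : 2 ≤ q := Fintype.one_lt_card
    have hq2 : 2 ≤ q := Fintype.one_lt_card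
    have hcast : ∀ a : ℕ, t ≤ a → ((∏ i : Fin t, (q ^ a - q ^ (i:ℕ)) : ℕ) : ℤ)
        = ∏ i ∈ Finset.range t, ((q:ℤ)^a - (q:ℤ)^i) := by
      intro a hta
      rw [Fin.prod_univ_eq_prod_range (fun i => q ^ a - q ^ i) t, Nat.cast_prod]
      refine Finset.prod_congr rfl fun i hi => ?_
      rw [Nat.cast_sub (Nat.pow_le_pow_right (by omega) (by
        have := Finset.mem_range.1 hi; omega))]
      push_cast; ring
    have hBne : (∏ i ∈ Finset.range t, ((q:ℤ)^t - (q:ℤ)^i)) ≠ 0 := by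
      apply Finset.prod_ne_zero_iff.2
      intro i hi
      have : (q:ℤ)^(i:ℕ) < (q:ℤ)^t := by
        apply pow_lt_pow_right₀ (by exact_mod_cast hq2) (Finset.mem_range.1 hi)
      omega
    have kk := qBinom_key q n t
    have : (Nat.card {W : Submodule F V // finrank F W = t} : ℤ)
        * ∏ i ∈ Finset.range t, ((q:ℤ)^t - (q:ℤ)^i)
        = (qBinom q n t : ℤ) * ∏ i ∈ Finset.range t, ((q:ℤ)^t - (q:ℤ)^i) := by
      rw [kk, ← hcast n htn, ← hcast t le_rfl, ← Nat.cast_mul, total2]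
    exact_mod_cast mul_right_cancel₀ hBne this
  · rw [qBinom_eq_zero _ htn, Nat.card_eq_zero]
    left
    exact ⟨fun W => by have := Submodule.finrank_le W.1; omega⟩

theorem finrank_comap_mkQ (V₀ : Submodule F V) (Wb : Submodule F (V ⧸ V₀)) :
    finrank F (Wb.comap V₀.mkQ) = finrank F V₀ + finrank F Wb := by
  classical
  set W : Submodule F V := Wb.comap V₀.mkQ with hW
  have hle : V₀ ≤ W := by
    intro x hx
    show (Submodule.Quotient.mk x : V ⧸ V₀) ∈ Wb
    rw [(Submodule.Quotient.mk_eq_zero V₀).2 hx]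
    exact Wb.zero_mem
  let φ : ↥W →ₗ[F] V ⧸ V₀ := V₀.mkQ.domRestrict W
  have hker : LinearMap.ker φ = Submodule.comap W.subtype V₀ := by
    ext x
    simp [φ, Submodule.Quotient.mk_eq_zero]
  have hrange : LinearMap.range φ = Wb := by
    ext y
    constructor
    · rintro ⟨⟨x, hx⟩, rfl⟩
      exact hx
    · intro hy
      obtain ⟨x, rfl⟩ := V₀.mkQ_surjective y
      exact ⟨⟨x, hy⟩, rfl⟩
  have h1 := LinearMap.finrank_range_add_finrank_ker φ
  rw [hrange, hker] at h1
  have h2 : finrank F (Submodule.comap W.subtype V₀) = finrank F V₀ :=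
    (Submodule.comapSubtypeEquivOfLe hle).finrank_eq
  omega

theorem card_submodule_ge (V₀ : Submodule F V) (d : ℕ) :
    Nat.card {W : Submodule F V // V₀ ≤ W ∧ finrank F W = d}
      = if finrank F V₀ ≤ d then
          qBinom (Fintype.card F) (finrank F V - finrank F V₀) (d - finrank F V₀)
        else 0 := by
  classical
  have hFD : FiniteDimensional F V := inferInstance
  set j := finrank F V₀ with hj
  split_ifs with hjd
  · have e : {W : Submodule F V // V₀ ≤ W ∧ finrank F W = d}
        ≃ {Wb : Submodule F (V ⧸ V₀) // finrank F Wb = d - j} := by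
      refine ⟨fun W => ⟨Submodule.map V₀.mkQ W.1, ?_⟩,
        fun Wb => ⟨Wb.1.comap V₀.mkQ, ?_, ?_⟩, fun W => ?_, fun Wb => ?_⟩
      · have hc : (Submodule.map V₀.mkQ W.1).comap V₀.mkQ = W.1 := by
          rw [Submodule.comap_map_eq, Submodule.ker_mkQ, sup_of_le_left W.2.1]
        have := finrank_comap_mkQ V₀ (Submodule.map V₀.mkQ W.1)
        rw [hc, W.2.2] at this
        omega
      · intro x hx
        show (Submodule.Quotient.mk x : V ⧸ V₀) ∈ Wb.1
        rw [(Submodule.Quotient.mk_eq_zero V₀).2 hx]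
        exact Wb.1.zero_mem
      · rw [finrank_comap_mkQ, Wb.2]
        omega
      · apply Subtype.ext
        show (Submodule.map V₀.mkQ W.1).comap V₀.mkQ = W.1
        rw [Submodule.comap_map_eq, Submodule.ker_mkQ, sup_of_le_left W.2.1]
      · apply Subtype.ext
        show (Wb.1.comap V₀.mkQ).map V₀.mkQ = Wb.1
        rw [Submodule.map_comap_eq, Submodule.range_mkQ, top_inf_eq]
    haveI : Finite (V ⧸ V₀) := Quotient.finite _
    rw [Nat.card_congr e, card_submodule (t := d - j)]
    congr 1
    have := Submodule.finrank_quotient_add_finrank V₀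
    omega
  · rw [Nat.card_eq_zero]
    left
    exact ⟨fun W => by
      have := Submodule.finrank_mono W.2.1
      rw [W.2.2] at this
      omega⟩

section Forms
open LinearMap

variable (F) in
/-- The standard dot-product bilinear form on `Fin k → F`. -/
noncomputable def dotForm (k : ℕ) : LinearMap.BilinForm F (Fin k → F) :=
  LinearMap.mk₂ F (fun x y => ∑ i, x i * y i)
    (fun x x' y => by simp [add_mul, Finset.sum_add_distrib])
    (fun c x y => by simp [Finset.mul_sum, mul_assoc])
    (fun x y y' => by simp [mul_add, Finset.sum_add_distrib])
    (fun c x y => by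
      simp only [Pi.smul_apply, smul_eq_mul, Finset.mul_sum]
      exact Finset.sum_congr rfl fun i _ => by ring)

variable (F) in
/-- The trace bilinear form on matrices. -/
noncomputable def matTrForm (k m : ℕ) : LinearMap.BilinForm F (Matrix (Fin k) (Fin m) F) :=
  LinearMap.mk₂ F (fun M N => Matrix.trace (M * Nᵀ))
    (fun M M' N => by rw [Matrix.add_mul, Matrix.trace_add])
    (fun c M N => by rw [Matrix.smul_mul, Matrix.trace_smul])
    (fun M N N' => by rw [Matrix.transpose_add, Matrix.mul_add, Matrix.trace_add])
    (fun c M N => by rw [Matrix.transpose_smul, Matrix.mul_smul, Matrix.trace_smul])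

lemma matTrForm_apply {k m : ℕ} (M N : Matrix (Fin k) (Fin m) F) :
    matTrForm F k m M N = ∑ i, ∑ j, M i j * N i j := by
  simp [matTrForm, Matrix.trace, Matrix.mul_apply, Matrix.diag]

lemma dotForm_symm {k : ℕ} : (dotForm F k).IsSymm := by
  constructor
  intro x y
  simp [dotForm, mul_comm]

lemma matTrForm_symm {k m : ℕ} : (matTrForm F k m).IsSymm := by
  constructor
  intro M N
  simp only [RingHom.id_apply, matTrForm_apply]
  exact Finset.sum_congr rfl fun i _ => Finset.sum_congr rfl fun j _ => mul_comm _ _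

lemma dotForm_nondegenerate {k : ℕ} : (dotForm F k).Nondegenerate := by
  refine (LinearMap.BilinForm.isSymm_iff.1 dotForm_symm).isRefl.nondegenerate_iff_separatingLeft.mpr ?_
  intro x hx
  funext i
  have := hx (Pi.single i 1)
  simpa [dotForm, Pi.single_apply, Finset.sum_ite_eq'] using this

lemma matTrForm_nondegenerate {k m : ℕ} : (matTrForm F k m).Nondegenerate := by
  refine (LinearMap.BilinForm.isSymm_iff.1 matTrForm_symm).isRefl.nondegenerate_iff_separatingLeft.mpr ?_
  intro M hM
  ext i j
  have := hM (Matrix.single i j 1)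
  rw [matTrForm_apply] at this
  simpa [Matrix.single, Finset.sum_ite_eq', ite_and] using this

lemma orthogonal_sup {M : Type} [AddCommGroup M] [Module F M] (B : LinearMap.BilinForm F M)
    (W W' : Submodule F M) :
    B.orthogonal (W ⊔ W') = B.orthogonal W ⊓ B.orthogonal W' := by
  ext x
  constructor
  · intro hx
    exact ⟨fun w hw => hx w (Submodule.mem_sup_left hw),
           fun w hw => hx w (Submodule.mem_sup_right hw)⟩
  · rintro ⟨h1, h2⟩ w hw
    obtain ⟨a, ha, b, hb, rfl⟩ := Submodule.mem_sup.1 hw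
    show B (a + b) x = 0
    rw [map_add, LinearMap.add_apply, h1 a ha, h2 b hb, add_zero]

end Forms

end Aux

section MatAux
open Module LinearMap
set_option linter.unusedSectionVars false

variable {F : Type} [Field F] [Fintype F] {k m : ℕ}

lemma dualCode_eq_orthogonal (C : Submodule F (Matrix (Fin k) (Fin m) F)) :
    dualCode C = (matTrForm F k m).orthogonal C := by
  ext N
  exact Iff.rfl

lemma finrank_matrix' : finrank F (Matrix (Fin k) (Fin m) F) = k * m := by
  rw [Module.finrank_matrix]
  simp

lemma finrank_dualCode (C : Submodule F (Matrix (Fin k) (Fin m) F)) :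
    finrank F (dualCode C) = k * m - finrank F C := by
  rw [dualCode_eq_orthogonal, LinearMap.BilinForm.finrank_orthogonal matTrForm_nondegenerate,
    finrank_matrix']

lemma dualCode_dualCode (C : Submodule F (Matrix (Fin k) (Fin m) F)) :
    dualCode (dualCode C) = C := by
  rw [dualCode_eq_orthogonal, dualCode_eq_orthogonal]
  exact LinearMap.BilinForm.orthogonal_orthogonal matTrForm_nondegenerate matTrForm_symm.isRefl C

lemma mem_matIn_iff {U : Submodule F (Fin k → F)} {M : Matrix (Fin k) (Fin m) F} :
    M ∈ matIn m U ↔ Submodule.span F (Set.range Mᵀ) ≤ U := by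
  rw [Submodule.span_le]
  constructor
  · rintro h _ ⟨j, rfl⟩
    exact h j
  · intro h j
    exact h (Set.mem_range_self j)

noncomputable def matInEquiv (U : Submodule F (Fin k → F)) :
    ↥(matIn m U) ≃ₗ[F] (Fin m → ↥U) where
  toFun M := fun j => ⟨M.1ᵀ j, M.2 j⟩
  map_add' M N := by funext j; exact Subtype.ext rfl
  map_smul' c M := by funext j; exact Subtype.ext rfl
  invFun f := ⟨Matrix.of fun i j => (f j : Fin k → F) i, fun j => by
    have : (Matrix.of fun i j => (f j : Fin k → F) i)ᵀ j = (f j : Fin k → F) := rfl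
    rw [this]; exact (f j).2⟩
  left_inv M := Subtype.ext rfl
  right_inv f := by funext j; exact Subtype.ext rfl

lemma finrank_matIn (U : Submodule F (Fin k → F)) :
    finrank F (matIn m U) = m * finrank F U := by
  rw [(matInEquiv U).finrank_eq]
  rw [Module.finrank_pi_fintype]
  simp [Finset.sum_const, mul_comm]

lemma dualCode_matIn (U : Submodule F (Fin k → F)) :
    dualCode (matIn m U) = matIn m ((dotForm F k).orthogonal U) := by
  ext N
  constructor
  · intro hN j
    intro u hu
    show dotForm F k u (Nᵀ j) = 0
    let M : Matrix (Fin k) (Fin m) F := Matrix.of fun i j' => if j' = j then u i else 0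
    have hM : M ∈ matIn m U := by
      intro j'
      by_cases h : j' = j
      · subst h
        have : Mᵀ j' = u := by funext i; simp [M]
        rw [this]; exact hu
      · have : Mᵀ j' = 0 := by funext i; simp [M, h]
        rw [this]; exact U.zero_mem
    have := hN M hM
    show ∑ i, u i * N i j = 0
    rw [show (Matrix.trace (M * Nᵀ)) = ∑ i, ∑ j', M i j' * N i j' from matTrForm_apply M N] at this
    rw [← this]
    rw [Finset.sum_comm]
    rw [Finset.sum_eq_single j]
    · exact Finset.sum_congr rfl fun i _ => by simp [M]
    · intro j' _ hj'
      apply Finset.sum_eq_zero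
      intro i _
      simp [M, hj']
    · intro h; exact absurd (Finset.mem_univ j) h
  · intro hN M hM
    show Matrix.trace (M * Nᵀ) = 0
    rw [show (Matrix.trace (M * Nᵀ)) = ∑ i, ∑ j', M i j' * N i j' from matTrForm_apply M N,
      Finset.sum_comm]
    apply Finset.sum_eq_zero
    intro j _
    exact hN j (Mᵀ j) (hM j)

lemma finrank_dotOrth (U : Submodule F (Fin k → F)) :
    finrank F ((dotForm F k).orthogonal U) = k - finrank F U := by
  rw [LinearMap.BilinForm.finrank_orthogonal dotForm_nondegenerate,
    Module.finrank_fintype_fun_eq_card]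
  simp

lemma dotOrth_dotOrth (U : Submodule F (Fin k → F)) :
    (dotForm F k).orthogonal ((dotForm F k).orthogonal U) = U :=
  LinearMap.BilinForm.orthogonal_orthogonal dotForm_nondegenerate dotForm_symm.isRefl U

end MatAux

section Assemble
open Module LinearMap
set_option linter.unusedSectionVars false

variable {F : Type} [Field F] [Fintype F] {k m : ℕ}

lemma nat_card_subtype_filter {α : Type} [Fintype α] (p : α → Prop) [DecidablePred p] :
    Nat.card {x // p x} = (Finset.univ.filter p).card := by
  rw [Nat.card_eq_fintype_card, Fintype.card_subtype]

lemma nat_card_submodule_eq_pow (W : Submodule F (Matrix (Fin k) (Fin m) F)) :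
    Nat.card ↥W = Fintype.card F ^ finrank F ↥W := by
  haveI := Fintype.ofFinite ↥W
  rw [Nat.card_eq_fintype_card, card_eq_pow_finrank (K := F)]

instance : Finite (Submodule F (Fin k → F)) :=
  Finite.of_injective (fun W => (W : Set (Fin k → F))) fun _ _ h => SetLike.coe_injective h

lemma qBinom_symm {n t : ℕ} (ht : t ≤ n) :
    qBinom (Fintype.card F) n t = qBinom (Fintype.card F) n (n - t) := by
  have h1 := card_submodule (F := F) (V := Fin n → F) t
  have h2 := card_submodule (F := F) (V := Fin n → F) (n - t)
  rw [Module.finrank_fintype_fun_eq_card, Fintype.card_fin] at h1 h2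
  rw [← h1, ← h2]
  apply Nat.card_congr
  refine ⟨fun W => ⟨(dotForm F n).orthogonal W.1, ?_⟩,
          fun W => ⟨(dotForm F n).orthogonal W.1, ?_⟩, fun W => ?_, fun W => ?_⟩
  · rw [finrank_dotOrth, W.2]
  · rw [finrank_dotOrth, W.2]; omega
  · exact Subtype.ext (dotOrth_dotOrth W.1)
  · exact Subtype.ext (dotOrth_dotOrth W.1)

lemma claimAB [Fintype (Submodule F (Fin k → F))]
    (C : Submodule F (Matrix (Fin k) (Fin m) F)) (d : ℕ) :
    ∑ U ∈ Finset.univ.filter (fun U : Submodule F (Fin k → F) => finrank F ↥U = d),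
        Nat.card ↥(C ⊓ matIn m U)
      = ∑ i ∈ Finset.range (d + 1), rankDist C i * qBinom (Fintype.card F) (k - i) (d - i) := by
  classical
  -- convert each card to a filter card
  have step1 : ∀ U : Submodule F (Fin k → F),
      Nat.card ↥(C ⊓ matIn m U)
        = ((Finset.univ.filter (fun M : Matrix (Fin k) (Fin m) F => M ∈ C)).filter
            (fun M => M ∈ matIn m U)).card := by
    intro U
    rw [Finset.filter_filter]
    rw [show (Nat.card ↥(C ⊓ matIn m U))
        = Nat.card {M : Matrix (Fin k) (Fin m) F // M ∈ C ∧ M ∈ matIn m U} from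
      Nat.card_congr (Equiv.subtypeEquivRight fun M => Submodule.mem_inf)]
    exact nat_card_subtype_filter _
  rw [Finset.sum_congr rfl fun U _ => step1 U]
  -- double counting
  rw [Finset.sum_congr rfl fun U _ => (Finset.card_filter _ _)]
  rw [Finset.sum_comm]
  -- inner sum: count subspaces containing the column span
  have step2 : ∀ M : Matrix (Fin k) (Fin m) F,
      (∑ U ∈ Finset.univ.filter (fun U : Submodule F (Fin k → F) => finrank F ↥U = d),
        if M ∈ matIn m U then 1 else 0)
      = if M.rank ≤ d then qBinom (Fintype.card F) (k - M.rank) (d - M.rank) else 0 := by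
    intro M
    rw [← Finset.card_filter, Finset.filter_filter]
    have : (Finset.univ.filter
        (fun U : Submodule F (Fin k → F) => finrank F ↥U = d ∧ M ∈ matIn m U)).card
        = Nat.card {U : Submodule F (Fin k → F) //
            Submodule.span F (Set.range Mᵀ) ≤ U ∧ finrank F ↥U = d} := by
      rw [nat_card_subtype_filter]
      congr 1
      apply Finset.filter_congr
      intro U _
      rw [mem_matIn_iff]
      tauto
    rw [this, card_submodule_ge]
    have hrank : finrank F ↥(Submodule.span F (Set.range Mᵀ)) = M.rank :=
      (Matrix.rank_eq_finrank_span_cols M).symm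
    rw [hrank, Module.finrank_fintype_fun_eq_card, Fintype.card_fin]
  rw [Finset.sum_congr rfl fun M _ => step2 M]
  -- group by rank
  rw [Finset.sum_ite, Finset.sum_const, smul_eq_mul, mul_zero, add_zero]
  rw [← Finset.sum_fiberwise_of_maps_to (g := Matrix.rank) (t := Finset.range (d + 1))
    (fun M hM => Finset.mem_range.2 (by
      simp only [Finset.mem_filter] at hM
      omega))]
  refine Finset.sum_congr rfl fun i hi => ?_
  have hi' := Finset.mem_range.1 hi
  have heq : ((Finset.univ.filter (fun M : Matrix (Fin k) (Fin m) F => M ∈ C)).filter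
        (fun M => M.rank ≤ d)).filter (fun M => M.rank = i)
      = (Finset.univ.filter (fun M : Matrix (Fin k) (Fin m) F => M ∈ C)).filter
        (fun M => M.rank = i) := by
    rw [Finset.filter_filter]
    apply Finset.filter_congr
    intro M _
    constructor
    · tauto
    · intro h; exact ⟨by omega, h⟩
  rw [heq]
  have : ∀ M ∈ (Finset.univ.filter (fun M : Matrix (Fin k) (Fin m) F => M ∈ C)).filter
      (fun M => M.rank = i),
      qBinom (Fintype.card F) (k - M.rank) (d - M.rank)
        = qBinom (Fintype.card F) (k - i) (d - i) := by
    intro M hM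
    simp only [Finset.mem_filter] at hM
    rw [hM.2]
  rw [Finset.sum_congr rfl this, Finset.sum_const, smul_eq_mul]
  congr 1
  rw [rankDist, nat_card_subtype_filter, Finset.filter_filter]

lemma perU (C : Submodule F (Matrix (Fin k) (Fin m) F)) (U : Submodule F (Fin k → F)) :
    Fintype.card F ^ (m * (k - finrank F ↥U)) * Nat.card ↥(C ⊓ matIn m U)
      = Nat.card ↥C
          * Nat.card ↥(dualCode C ⊓ matIn m ((dotForm F k).orthogonal U)) := by
  have hdual : dualCode C ⊓ matIn m ((dotForm F k).orthogonal U)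
      = dualCode (C ⊔ matIn m U) := by
    rw [← dualCode_matIn, dualCode_eq_orthogonal, dualCode_eq_orthogonal,
      dualCode_eq_orthogonal, orthogonal_sup]
  rw [hdual, nat_card_submodule_eq_pow, nat_card_submodule_eq_pow, nat_card_submodule_eq_pow,
    ← pow_add, ← pow_add]
  congr 1
  have h1 := Submodule.finrank_sup_add_finrank_inf_eq C (matIn m U)
  have h2 := finrank_dualCode (C ⊔ matIn m U)
  have h3 : finrank F ↥(C ⊔ matIn m U) ≤ k * m := by
    have := Submodule.finrank_le (C ⊔ matIn m U)
    rwa [finrank_matrix'] at this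
  have h4 : finrank F ↥U ≤ k := by
    have := Submodule.finrank_le U
    rwa [Module.finrank_fintype_fun_eq_card, Fintype.card_fin] at this
  have h5 : finrank F (matIn m U) = m * finrank F ↥U := finrank_matIn U
  have h6 : m * (k - finrank F ↥U) + m * finrank F ↥U = m * k := by
    rw [← Nat.mul_add, Nat.sub_add_cancel h4]
  have h7 : m * k = k * m := Nat.mul_comm m k
  omega

end Assemble

/-- MacWilliams identities (moments form) for Delsarte rank-metric codes. -/
theorem stmt_6 (F : Type) [Field F] [Fintype F] (q k m : ℕ) (hq : Fintype.card F = q)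
    (hk : 0 < k) (hm : 0 < m) (C : Submodule F (Matrix (Fin k) (Fin m) F))
    (ν : ℕ) (hν : ν ≤ k) :
    q ^ (m * ν) * ∑ i ∈ Finset.range (k - ν + 1), rankDist C i * qBinom q (k - i) ν =
      Nat.card ↥C *
        ∑ j ∈ Finset.range (ν + 1), rankDist (dualCode C) j * qBinom q (k - j) (ν - j) := by
  classical
  subst hq
  haveI : Fintype (Submodule F (Fin k → F)) := Fintype.ofFinite _
  have hA := claimAB (m := m) C (k - ν)
  have hB := claimAB (m := m) (dualCode C) ν
  have hsum1 : ∑ i ∈ Finset.range (k - ν + 1), rankDist C i * qBinom (Fintype.card F) (k - i) ν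
      = ∑ U ∈ Finset.univ.filter (fun U : Submodule F (Fin k → F) =>
          Module.finrank F ↥U = k - ν), Nat.card ↥(C ⊓ matIn m U) := by
    rw [hA]
    refine Finset.sum_congr rfl fun i hi => ?_
    have hi' := Finset.mem_range.1 hi
    congr 1
    exact ((qBinom_symm (n := k - i) (t := k - ν - i) (by omega)).trans
      (by congr 1; omega)).symm
  rw [hsum1, Finset.mul_sum]
  have hstep : ∀ U ∈ Finset.univ.filter (fun U : Submodule F (Fin k → F) =>
        Module.finrank F ↥U = k - ν),
      Fintype.card F ^ (m * ν) * Nat.card ↥(C ⊓ matIn m U)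
        = Nat.card ↥C * Nat.card ↥(dualCode C ⊓ matIn m ((dotForm F k).orthogonal U)) := by
    intro U hU
    have hU' : Module.finrank F ↥U = k - ν := (Finset.mem_filter.1 hU).2
    have h := perU C U
    rw [hU', show k - (k - ν) = ν from by omega] at h
    exact h
  rw [Finset.sum_congr rfl hstep, ← Finset.mul_sum]
  congr 1
  rw [← hB]
  refine Finset.sum_nbij' (fun U => (dotForm F k).orthogonal U)
    (fun W => (dotForm F k).orthogonal W) ?_ ?_ ?_ ?_ ?_
  · intro U hU
    have hU' : Module.finrank F ↥U = k - ν := (Finset.mem_filter.1 hU).2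
    refine Finset.mem_filter.2 ⟨Finset.mem_univ _, ?_⟩
    rw [finrank_dotOrth, hU']
    omega
  · intro W hW
    have hW' : Module.finrank F ↥W = ν := (Finset.mem_filter.1 hW).2
    refine Finset.mem_filter.2 ⟨Finset.mem_univ _, ?_⟩
    rw [finrank_dotOrth, hW']
  · intro U _
    exact dotOrth_dotOrth U
  · intro W _
    exact dotOrth_dotOrth W
  · intro U _
    rfl
end

section
/- Let q be a prime power and k, m positive integers. If C ⊆ Mat(k×m, F_q) is an MRD code, then its dual C^⊥ (with respect to the trace product) is also an MRD code. -/
open Matrix BigOperators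

variable {F : Type} [Field F]

-- Auxiliary lemmas
section Aux
open Module

section Core
variable {k m t : ℕ}

lemma matRank_eq_zero_iff (M : Matrix (Fin k) (Fin m) F) :
    M.rank = 0 ↔ M = 0 := by
  constructor
  · intro h
    rw [Matrix.rank, Submodule.finrank_eq_zero, LinearMap.range_eq_bot] at h
    ext i j
    have h2 : M.mulVecLin (Pi.single j 1) = 0 := by rw [h]; rfl
    have := congrFun h2 i
    simpa [Matrix.mulVecLin_apply, Matrix.mulVec_single] using this
  · rintro rfl; simp

lemma rank_le_of_li_mul_eq_zero {U : Matrix (Fin t) (Fin k) F}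
    (hU : LinearIndependent F U) {M : Matrix (Fin k) (Fin m) F}
    (h : U * M = 0) : t + M.rank ≤ k := by
  have h1 := Matrix.rank_add_rank_le_card_of_mul_eq_zero h
  rw [hU.rank_matrix] at h1
  simpa using h1

/-- Left-multiplication by a fixed matrix as a linear map. -/
def lmulMap (U : Matrix (Fin t) (Fin k) F) :
    Matrix (Fin k) (Fin m) F →ₗ[F] Matrix (Fin t) (Fin m) F where
  toFun M := U * M
  map_add' a b := by simp [Matrix.mul_add]
  map_smul' c a := by simp [Matrix.mul_smul]

/-- existence of a linearly independent family of t vectors in F^k, t ≤ k -/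
lemma exists_li_fam (h : t ≤ k) :
    ∃ u : Fin t → (Fin k → F), LinearIndependent F u := by
  refine ⟨fun s => Pi.single (Fin.castLE h s) 1, ?_⟩
  have hb := (Pi.basisFun F (Fin k)).linearIndependent
  have : (fun s : Fin t => Pi.single (Fin.castLE h s) (1:F))
      = (fun i : Fin k => Pi.basisFun F (Fin k) i) ∘ Fin.castLE h := by
    funext s; simp [Pi.basisFun_apply]
  rw [this]
  exact hb.comp _ (Fin.castLE_injective h)

end Core

section Core2
variable {k m t : ℕ}

/-- extend a li family spanning the column space of N to size t -/
lemma exists_li_span_cols (N : Matrix (Fin k) (Fin m) F) (hr : N.rank ≤ t) (htk : t ≤ k) :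
    ∃ u : Fin t → (Fin k → F), LinearIndependent F u ∧
      Submodule.span F (Set.range Nᵀ) ≤ Submodule.span F (Set.range u) := by
  -- first: a family of size rank N
  have key : ∀ s : ℕ, N.rank ≤ s → s ≤ k → ∃ u : Fin s → (Fin k → F),
      LinearIndependent F u ∧ Submodule.span F (Set.range Nᵀ) ≤ Submodule.span F (Set.range u) := by
    intro s hs hsk
    induction s with
    | zero =>
      refine ⟨Fin.elim0, linearIndependent_empty_type, ?_⟩
      have : N = 0 := (matRank_eq_zero_iff N).1 (Nat.le_zero.1 hs)
      subst this
      rw [Submodule.span_le]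
      rintro x ⟨j, rfl⟩
      simp
      rfl
    | succ s ih =>
      by_cases hs' : N.rank ≤ s
      · obtain ⟨u, hu, hsp⟩ := ih hs' (Nat.le_of_succ_le hsk)
        have hlt : s < finrank F (Fin k → F) := by
          rw [Module.finrank_pi]
          simpa using hsk
        obtain ⟨x, hx⟩ := exists_linearIndependent_snoc_of_lt_finrank hu hlt
        refine ⟨Fin.snoc u x, hx, hsp.trans (Submodule.span_mono ?_)⟩
        rintro y ⟨i, rfl⟩
        exact ⟨Fin.castSucc i, by simp⟩
      · -- N.rank = s + 1 : take basis of column span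
        have hrank : N.rank = s + 1 := le_antisymm hs (not_le.1 hs')
        set W := Submodule.span F (Set.range Nᵀ) with hW
        have hfin : finrank F W = s + 1 := by
          rw [← hrank, Matrix.rank_eq_finrank_span_cols]
          rfl
        let b := finBasisOfFinrankEq F W hfin
        refine ⟨fun i => (b i : Fin k → F), ?_, ?_⟩
        · exact b.linearIndependent.map' W.subtype W.ker_subtype
        · intro x hx
          have : (fun i => (b i : Fin k → F)) = W.subtype ∘ b := rfl
          rw [this, Set.range_comp, Submodule.span_image, b.span_eq, Submodule.map_top,
            Submodule.range_subtype]
          exact hx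
  exact key t hr htk

/-- factor N through a li family containing its column space -/
lemma exists_factor (N : Matrix (Fin k) (Fin m) F) {u : Fin t → (Fin k → F)}
    (hu : LinearIndependent F u)
    (hsp : Submodule.span F (Set.range Nᵀ) ≤ Submodule.span F (Set.range u)) :
    ∃ B : Matrix (Fin t) (Fin m) F, N = (Matrix.of u)ᵀ * B := by
  classical
  set W := Submodule.span F (Set.range u) with hW
  let bas : Basis (Fin t) F W := Basis.span hu
  have hcol : ∀ j, Nᵀ j ∈ W := fun j => hsp (Submodule.subset_span ⟨j, rfl⟩)
  refine ⟨Matrix.of fun s j => bas.repr ⟨Nᵀ j, hcol j⟩ s, ?_⟩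
  ext i j
  have hrepr : (⟨Nᵀ j, hcol j⟩ : W) = ∑ s, bas.repr ⟨Nᵀ j, hcol j⟩ s • bas s := by
    exact (Basis.sum_repr bas ⟨Nᵀ j, hcol j⟩).symm
  have hval : (Nᵀ j : Fin k → F) = ∑ s, bas.repr ⟨Nᵀ j, hcol j⟩ s • (bas s : Fin k → F) := by
    have := congrArg (Subtype.val) hrepr
    simpa only [Submodule.coe_sum, Submodule.coe_smul] using this
  have := congrFun hval i
  simp only [Matrix.transpose_apply] at this
  rw [this, Matrix.mul_apply]
  simp only [Finset.sum_apply, Pi.smul_apply, smul_eq_mul]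
  refine Finset.sum_congr rfl fun s _ => ?_
  rw [Basis.span_apply]
  simp [Matrix.of_apply, mul_comm]

end Core2
lemma trace_mul_transpose_eq {k m : ℕ} (M N : Matrix (Fin k) (Fin m) F) :
    Matrix.trace (M * Nᵀ) = ∑ i, ∑ j, M i j * N i j := by
  simp [Matrix.trace, Matrix.mul_apply, Matrix.diag]

/-- The pairing map into the dual of C. -/
noncomputable def pairMap {k m : ℕ} (C : Submodule F (Matrix (Fin k) (Fin m) F)) :
    Matrix (Fin k) (Fin m) F →ₗ[F] Module.Dual F C where
  toFun N :=
    { toFun := fun M => Matrix.trace ((M : Matrix (Fin k) (Fin m) F) * Nᵀ)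
      map_add' := by intro a b; simp [Matrix.add_mul]
      map_smul' := by intro c a; simp [Matrix.smul_mul] }
  map_add' := by
    intro a b; ext M; simp [Matrix.transpose_add, Matrix.mul_add]
  map_smul' := by
    intro c a; ext M; simp [Matrix.transpose_smul, Matrix.mul_smul]

lemma ker_pairMap {k m : ℕ} (C : Submodule F (Matrix (Fin k) (Fin m) F)) :
    LinearMap.ker (pairMap C) = dualCode C := by
  ext N
  simp only [LinearMap.mem_ker, pairMap, LinearMap.coe_mk, AddHom.coe_mk]
  constructor
  · intro h M hM
    have := LinearMap.congr_fun h ⟨M, hM⟩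
    simpa using this
  · intro h
    ext M
    simpa using h M M.2

lemma surjective_pairMap {k m : ℕ} (C : Submodule F (Matrix (Fin k) (Fin m) F)) :
    Function.Surjective (pairMap C) := by
  intro φ
  obtain ⟨g, hg⟩ := LinearMap.exists_extend φ
  classical
  refine ⟨Matrix.of fun i j => g (Matrix.single i j 1), ?_⟩
  ext M
  simp only [pairMap, LinearMap.coe_mk, AddHom.coe_mk]
  rw [trace_mul_transpose_eq]
  have : (M : Matrix (Fin k) (Fin m) F) = ∑ i, ∑ j, Matrix.single i j ((M : Matrix (Fin k) (Fin m) F) i j) :=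
    Matrix.matrix_eq_sum_single _
  calc ∑ i, ∑ j, (M : Matrix (Fin k) (Fin m) F) i j * g (Matrix.single i j 1)
      = g ((M : Matrix (Fin k) (Fin m) F)) := by
        conv_rhs => rw [this]
        rw [map_sum]
        refine Finset.sum_congr rfl fun i _ => ?_
        rw [map_sum]
        refine Finset.sum_congr rfl fun j _ => ?_
        have h1 : Matrix.single i j ((M : Matrix (Fin k) (Fin m) F) i j)
            = ((M : Matrix (Fin k) (Fin m) F) i j) • Matrix.single i j (1 : F) := by
          rw [Matrix.smul_single, smul_eq_mul, mul_one]
        rw [h1, g.map_smul, smul_eq_mul]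
    _ = φ M := by
        have := LinearMap.congr_fun hg M
        simpa using this

lemma finrank_dualCode_add {k m : ℕ} (C : Submodule F (Matrix (Fin k) (Fin m) F)) :
    finrank F (dualCode C) + finrank F C = k * m := by
  have h := LinearMap.finrank_range_add_finrank_ker (pairMap C)
  rw [ker_pairMap, LinearMap.range_eq_top.2 (surjective_pairMap C), finrank_top,
    Subspace.dual_finrank_eq] at h
  have hM : finrank F (Matrix (Fin k) (Fin m) F) = k * m := by
    rw [Module.finrank_matrix]
    simp
  omega

section Core3
variable {k m t : ℕ} {D : Submodule F (Matrix (Fin k) (Fin m) F)}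

lemma minrk_mem (hD : D ≠ ⊥) : ∃ M ∈ D, M ≠ 0 ∧ M.rank = minrk D := by
  have hne : {r | ∃ M ∈ D, M ≠ 0 ∧ M.rank = r}.Nonempty := by
    obtain ⟨M, hM, h0⟩ := D.ne_bot_iff.1 hD
    exact ⟨M.rank, M, hM, h0, rfl⟩
  exact Nat.sInf_mem hne

lemma minrk_le {M : Matrix (Fin k) (Fin m) F} (hM : M ∈ D) (h0 : M ≠ 0) :
    minrk D ≤ M.rank := Nat.sInf_le ⟨M, hM, h0, rfl⟩

lemma one_le_minrk (hD : D ≠ ⊥) : 1 ≤ minrk D := by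
  obtain ⟨M, _, h0, hr⟩ := minrk_mem hD
  rw [← hr]
  exact Nat.one_le_iff_ne_zero.2 fun h => h0 ((matRank_eq_zero_iff M).1 h)

lemma minrk_le_height (hD : D ≠ ⊥) : minrk D ≤ k := by
  obtain ⟨M, _, _, hr⟩ := minrk_mem hD
  rw [← hr]; exact Matrix.rank_le_height M

lemma minrk_le_width (hD : D ≠ ⊥) : minrk D ≤ m := by
  obtain ⟨M, _, _, hr⟩ := minrk_mem hD
  rw [← hr]; exact Matrix.rank_le_width M

lemma finrank_mat (k m : ℕ) : finrank F (Matrix (Fin k) (Fin m) F) = k * m := by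
  rw [Module.finrank_matrix]; simp

lemma injective_lmul {U : Matrix (Fin t) (Fin k) F}
    (hU : LinearIndependent F U)
    (hmin : ∀ M ∈ D, M ≠ 0 → k < t + M.rank) :
    Function.Injective ((lmulMap (m := m) U).domRestrict D) := by
  rw [← LinearMap.ker_eq_bot, LinearMap.ker_eq_bot']
  intro ⟨M, hM⟩ hMz
  have hUM : U * M = 0 := by simpa [lmulMap] using hMz
  by_contra h0
  have hMne : M ≠ 0 := fun h => h0 (by simp only [h]; rfl)
  have := rank_le_of_li_mul_eq_zero hU hUM
  have := hmin M hM hMne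
  omega

lemma singleton_bound (hmin : ∀ M ∈ D, M ≠ 0 → k < t + M.rank) (htk : t ≤ k) :
    finrank F D ≤ t * m := by
  obtain ⟨u, hu⟩ := exists_li_fam (F := F) htk
  have hinj := injective_lmul (D := D) (U := Matrix.of u) hu hmin
  have := LinearMap.finrank_le_finrank_of_injective hinj
  calc finrank F D ≤ finrank F (Matrix (Fin t) (Fin m) F) := this
    _ = t * m := finrank_mat t m

lemma surjective_lmul {U : Matrix (Fin t) (Fin k) F}
    (hU : LinearIndependent F U)
    (hmin : ∀ M ∈ D, M ≠ 0 → k < t + M.rank)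
    (hdim : finrank F D = t * m) :
    ∀ T : Matrix (Fin t) (Fin m) F, ∃ M ∈ D, U * M = T := by
  intro T
  have hinj := injective_lmul (D := D) (U := U) hU hmin
  have hfr : finrank F D = finrank F (Matrix (Fin t) (Fin m) F) := by
    rw [hdim, finrank_mat]
  have hsurj := (LinearMap.injective_iff_surjective_of_finrank_eq_finrank hfr).1 hinj
  obtain ⟨⟨M, hM⟩, hMT⟩ := hsurj T
  exact ⟨M, hM, hMT⟩

end Core3

section Core4
variable {k m : ℕ}

lemma dual_rank_lb {d : ℕ} {C : Submodule F (Matrix (Fin k) (Fin m) F)}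
    (hd1 : 1 ≤ d) (hdk : d ≤ k)
    (hmin : ∀ M ∈ C, M ≠ 0 → d ≤ M.rank)
    (hdim : finrank F C = (k - d + 1) * m) :
    ∀ N ∈ dualCode C, N ≠ 0 → k - d + 1 < N.rank := by
  intro N hN hN0
  by_contra hcon
  push_neg at hcon
  set t := k - d + 1 with ht
  have htk : t ≤ k := by omega
  have hmin' : ∀ M ∈ C, M ≠ 0 → k < t + M.rank := by
    intro M hM h0
    have := hmin M hM h0
    omega
  obtain ⟨u, hu, hsp⟩ := exists_li_span_cols N hcon htk
  obtain ⟨B, hB⟩ := exists_factor N hu hsp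
  have hBne : B ≠ 0 := by
    rintro rfl
    exact hN0 (by rw [hB, Matrix.mul_zero])
  have hex : ∃ s j, B s j ≠ 0 := by
    by_contra h
    push_neg at h
    exact hBne (by ext s j; simpa using h s j)
  obtain ⟨s0, j0, hB0⟩ := hex
  classical
  obtain ⟨M, hM, hUM⟩ := surjective_lmul hu hmin' hdim (Matrix.single s0 j0 1)
  have h0 := hN M hM
  rw [hB] at h0
  have hUM' : Matrix.of u * M = Matrix.single s0 j0 1 := hUM
  have htr : Matrix.trace (M * ((Matrix.of u)ᵀ * B)ᵀ) = B s0 j0 := by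
    rw [Matrix.transpose_mul, Matrix.transpose_transpose, ← Matrix.mul_assoc,
      Matrix.trace_mul_comm, ← Matrix.mul_assoc, hUM',
      trace_mul_transpose_eq]
    simp [Matrix.single, ite_and, Finset.sum_ite_eq]
  rw [htr] at h0
  exact hB0 h0

lemma isMRD_top (hk : 0 < k) (hm : 0 < m) :
    IsMRD (⊤ : Submodule F (Matrix (Fin k) (Fin m) F)) := by
  classical
  set i0 : Fin k := ⟨0, hk⟩
  set j0 : Fin m := ⟨0, hm⟩
  set E : Matrix (Fin k) (Fin m) F := Matrix.single i0 j0 1 with hE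
  have hEne : E ≠ 0 := by
    intro h
    have := congrFun (congrFun h i0) j0
    simp [hE, Matrix.single] at this
  have hErank : E.rank = 1 := by
    have hfac : E = (Matrix.of fun i (_ : Fin 1) => if i = i0 then (1:F) else 0) *
        (Matrix.of fun (_ : Fin 1) j => if j = j0 then (1:F) else 0) := by
      ext i j
      by_cases hi : i = i0 <;> by_cases hj : j = j0 <;>
        simp [hE, Matrix.mul_apply, Matrix.single, hi, hj, eq_comm]
    have hle : E.rank ≤ 1 := by
      rw [hfac]
      exact (Matrix.rank_mul_le_left _ _).trans ((Matrix.rank_le_card_width _).trans (by simp))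
    have hge : E.rank ≠ 0 := fun h => hEne ((matRank_eq_zero_iff E).1 h)
    omega
  have hminrk : minrk (⊤ : Submodule F (Matrix (Fin k) (Fin m) F)) = 1 := by
    have h1 : minrk (⊤ : Submodule F (Matrix (Fin k) (Fin m) F)) ≤ 1 := by
      have := minrk_le (D := (⊤ : Submodule F (Matrix (Fin k) (Fin m) F)))
        (Submodule.mem_top) hEne
      rw [hErank] at this
      exact this
    have h2 : (⊤ : Submodule F (Matrix (Fin k) (Fin m) F)) ≠ ⊥ := by
      rw [Submodule.ne_bot_iff]
      exact ⟨E, Submodule.mem_top, hEne⟩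
    have := one_le_minrk h2
    omega
  right
  rw [hminrk, finrank_top, finrank_mat]
  have hmin1 : min k m - 1 + 1 = min k m := by
    have : 1 ≤ min k m := by omega
    omega
  rw [hmin1]
  rcases le_total k m with h | h
  · rw [Nat.max_eq_right h, Nat.min_eq_left h, Nat.mul_comm]
  · rw [Nat.max_eq_left h, Nat.min_eq_right h]

lemma dualCode_bot : dualCode (⊥ : Submodule F (Matrix (Fin k) (Fin m) F)) = ⊤ := by
  ext N
  constructor
  · intro _; trivial
  · intro _ M hM
    rw [Submodule.mem_bot] at hM
    rw [hM]
    simp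

lemma isMRD_dual_of_le (hk : 0 < k) (hkm : k ≤ m)
    {C : Submodule F (Matrix (Fin k) (Fin m) F)} (hC : IsMRD C) :
    IsMRD (dualCode C) := by
  have hm : 0 < m := lt_of_lt_of_le hk hkm
  by_cases hbot : C = ⊥
  · rw [hbot, dualCode_bot]
    exact isMRD_top hk hm
  rcases hC with h | hdim
  · exact absurd h hbot
  by_cases hDbot : dualCode C = ⊥
  · left; exact hDbot
  set d := minrk C with hd
  have hd1 : 1 ≤ d := one_le_minrk hbot
  have hdk : d ≤ k := minrk_le_height hbot
  have hmin : ∀ M ∈ C, M ≠ 0 → d ≤ M.rank := fun M hM h0 => minrk_le hM h0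
  have hdim' : finrank F C = (k - d + 1) * m := by
    rw [hdim, Nat.max_eq_right hkm, Nat.min_eq_left hkm, Nat.mul_comm]
  set d' := minrk (dualCode C) with hd'
  have hd'1 : 1 ≤ d' := one_le_minrk hDbot
  have hd'k : d' ≤ k := minrk_le_height hDbot
  have hlb : k - d + 1 < d' := by
    obtain ⟨N, hN, hN0, hNr⟩ := minrk_mem hDbot
    rw [hd', ← hNr]
    exact dual_rank_lb hd1 hdk hmin hdim' N hN hN0
  have hsb : finrank F (dualCode C) ≤ (k - d' + 1) * m := by
    refine singleton_bound ?_ (by omega)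
    intro N hN h0
    have := minrk_le hN h0
    omega
  have hsum := finrank_dualCode_add C
  rw [hdim'] at hsum
  have hx : finrank F (dualCode C) = (d - 1) * m := by
    have h1 : (k - d + 1) + (d - 1) = k := by omega
    have h2 : finrank F (dualCode C) + (k - d + 1) * m
        = (k - d + 1) * m + (d - 1) * m := by
      rw [← Nat.add_mul, h1]
      exact hsum
    omega
  have hba : k - d' + 1 ≤ d - 1 := by omega
  have heq : (d - 1) * m = (k - d' + 1) * m := by
    have h1 : (k - d' + 1) * m ≤ (d - 1) * m := Nat.mul_le_mul_right m hba
    have h2 : (d - 1) * m ≤ (k - d' + 1) * m := by rw [← hx]; exact hsb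
    omega
  right
  rw [Nat.max_eq_right hkm, Nat.min_eq_left hkm, hx, heq, Nat.mul_comm]

end Core4

section Transpose
variable {k m : ℕ}

noncomputable abbrev eT (k m : ℕ) :
    Matrix (Fin k) (Fin m) F ≃ₗ[F] Matrix (Fin m) (Fin k) F :=
  Matrix.transposeLinearEquiv (Fin k) (Fin m) F F

lemma mem_map_eT {C : Submodule F (Matrix (Fin k) (Fin m) F)}
    {N : Matrix (Fin m) (Fin k) F} :
    N ∈ C.map (eT k m (F := F)).toLinearMap ↔ Nᵀ ∈ C := by
  rw [Submodule.mem_map_equiv]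
  rfl

lemma map_map_eT (D : Submodule F (Matrix (Fin k) (Fin m) F)) :
    (D.map (eT k m (F := F)).toLinearMap).map (eT m k (F := F)).toLinearMap = D := by
  ext x
  rw [mem_map_eT, mem_map_eT, Matrix.transpose_transpose]

lemma dualCode_map_eT (C : Submodule F (Matrix (Fin k) (Fin m) F)) :
    dualCode (C.map (eT k m (F := F)).toLinearMap)
      = (dualCode C).map (eT k m (F := F)).toLinearMap := by
  ext N
  constructor
  · intro h
    rw [mem_map_eT]
    intro M hM
    rw [Matrix.transpose_transpose]
    have := h Mᵀ (mem_map_eT.2 (by rwa [Matrix.transpose_transpose]))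
    rwa [← Matrix.transpose_mul, Matrix.trace_transpose, Matrix.trace_mul_comm] at this
  · intro h M hM
    rw [mem_map_eT] at h
    have := h Mᵀ (mem_map_eT.1 hM)
    rw [Matrix.transpose_transpose] at this
    rwa [← Matrix.trace_transpose, Matrix.transpose_mul, Matrix.transpose_transpose,
      Matrix.trace_mul_comm] at this

lemma minrk_map_eT (C : Submodule F (Matrix (Fin k) (Fin m) F)) :
    minrk (C.map (eT k m (F := F)).toLinearMap) = minrk C := by
  unfold minrk
  congr 1
  ext r
  constructor
  · rintro ⟨N, hN, hN0, rfl⟩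
    rw [mem_map_eT] at hN
    refine ⟨Nᵀ, hN, fun h => hN0 (by rw [← Matrix.transpose_transpose N, h]; simp), ?_⟩
    rw [Matrix.rank_transpose]
  · rintro ⟨M, hM, hM0, rfl⟩
    refine ⟨Mᵀ, mem_map_eT.2 (by rwa [Matrix.transpose_transpose]),
      fun h => hM0 (by rw [← Matrix.transpose_transpose M, h]; simp), Matrix.rank_transpose M⟩

lemma isMRD_map_eT {C : Submodule F (Matrix (Fin k) (Fin m) F)} (hC : IsMRD C) :
    IsMRD (C.map (eT k m (F := F)).toLinearMap) := by
  rcases hC with h | h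
  · left; rw [h, Submodule.map_bot]
  · right
    rw [minrk_map_eT, LinearEquiv.finrank_map_eq, h, Nat.max_comm, Nat.min_comm]

end Transpose


end Aux

/-- The dual of an MRD code is MRD. -/
theorem stmt_7 (F : Type) [Field F] [Fintype F] (k m : ℕ) (hk : 0 < k) (hm : 0 < m)
    (C : Submodule F (Matrix (Fin k) (Fin m) F)) (hC : IsMRD C) :
    IsMRD (dualCode C) := by
  rcases le_total k m with hkm | hmk
  · exact isMRD_dual_of_le hk hkm hC
  · have h1 := isMRD_map_eT hC
    have h2 := isMRD_dual_of_le hm hmk h1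
    rw [dualCode_map_eT] at h2
    have h3 := isMRD_map_eT h2
    rwa [map_map_eT] at h3
end
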